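/- For every α ∈ ℂ, the algebra 𝔠₆₉(α) on ℂ⁵ with nonzero basis products e₁e₁ = e₄, e₁e₂ = α e₅, e₁e₃ = e₅, e₂e₂ = e₅, e₂e₃ = e₄, e₄e₄ = e₅ is a nilpotent commutative algebra (A⁶ = 0) that satisfies the almost-Jordan identity 2·(((y·x)·x)·x) + y·((x·x)·x) = 3·((y·(x·x))·x) for all x, y, but does not satisfy the Jordan identity: there exist x, y with ((x·x)·y)·x ≠ (x·x)·(y·x). -/
import Mathlib


/-- `IsProdOf μ n z` says that `z` is a product of `n` elements under the
multiplication `μ`, with some arrangement of parentheses. -/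
inductive IsProdOf {V : Type*} (μ : V → V → V) : ℕ → V → Prop
  | base (x : V) : IsProdOf μ 1 x
  | mul {m n : ℕ} {a b : V} :
      IsProdOf μ m a → IsProdOf μ n b → IsProdOf μ (m + n) (μ a b)

/-- Structure constants of the algebra 𝔠₆₉(α) (e₁e₁ = e₄, e₁e₂ = α e₅, e₁e₃ = e₅, e₂e₂ = e₅, e₂e₃ = e₄, e₄e₄ = e₅) on ℂ⁵ (basis `e₁, …, e₅` indexed by `Fin 5`),
extended symmetrically; unlisted products of basis vectors are zero. -/
noncomputable def tbl69 (α : ℂ) : Fin 5 → Fin 5 → Fin 5 → ℂ :=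
  ![![![0,0,0,1,0], ![0,0,0,0,α], ![0,0,0,0,1], 0, 0],
    ![![0,0,0,0,α], ![0,0,0,0,1], ![0,0,0,1,0], 0, 0],
    ![![0,0,0,0,1], ![0,0,0,1,0], 0, 0, 0],
    ![0, 0, 0, ![0,0,0,0,1], 0],
    0]

/-- The bilinear multiplication of the algebra on ℂ⁵. -/
noncomputable def mul69 (α : ℂ) (x y : Fin 5 → ℂ) : Fin 5 → ℂ :=
  fun k => ∑ i, ∑ j, x i * y j * tbl69 α i j k

lemma mul69_apply0 (α : ℂ) (x y : Fin 5 → ℂ) : mul69 α x y 0 = 0 := by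
  simp [mul69, tbl69, Fin.sum_univ_five, Matrix.vecHead, Matrix.vecTail]

lemma mul69_apply1 (α : ℂ) (x y : Fin 5 → ℂ) : mul69 α x y 1 = 0 := by
  simp [mul69, tbl69, Fin.sum_univ_five, Matrix.vecHead, Matrix.vecTail]

lemma mul69_apply2 (α : ℂ) (x y : Fin 5 → ℂ) : mul69 α x y 2 = 0 := by
  simp [mul69, tbl69, Fin.sum_univ_five, Matrix.vecHead, Matrix.vecTail]

lemma mul69_apply3 (α : ℂ) (x y : Fin 5 → ℂ) :
    mul69 α x y 3 = x 0 * y 0 + x 1 * y 2 + x 2 * y 1 := by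
  simp [mul69, tbl69, Fin.sum_univ_five, Matrix.vecHead, Matrix.vecTail]

lemma mul69_apply4 (α : ℂ) (x y : Fin 5 → ℂ) :
    mul69 α x y 4 = α * (x 0 * y 1) + α * (x 1 * y 0) + x 0 * y 2 + x 2 * y 0 +
      x 1 * y 1 + x 3 * y 3 := by
  simp [mul69, tbl69, Fin.sum_univ_five, Matrix.vecHead, Matrix.vecTail]; ring

lemma fin5_cases (i : Fin 5) : i = 0 ∨ i = 1 ∨ i = 2 ∨ i = 3 ∨ i = 4 := by omega

lemma isProdOf_pos {V : Type*} {μ : V → V → V} {n : ℕ} {z : V}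
    (h : IsProdOf μ n z) : 1 ≤ n := by
  induction h with
  | base x => exact le_refl 1
  | mul ha hb iha ihb => omega

lemma prod2_low (α : ℂ) (x y : Fin 5 → ℂ) :
    mul69 α x y 0 = 0 ∧ mul69 α x y 1 = 0 ∧ mul69 α x y 2 = 0 :=
  ⟨mul69_apply0 α x y, mul69_apply1 α x y, mul69_apply2 α x y⟩

lemma prod_ge2 {α : ℂ} {n : ℕ} {z : Fin 5 → ℂ} (h : IsProdOf (mul69 α) n z)
    (hn : 2 ≤ n) : z 0 = 0 ∧ z 1 = 0 ∧ z 2 = 0 := by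
  cases h with
  | base x => omega
  | mul ha hb => exact prod2_low α _ _

lemma prod_ge3 {α : ℂ} {n : ℕ} {z : Fin 5 → ℂ} (h : IsProdOf (mul69 α) n z)
    (hn : 3 ≤ n) : z 0 = 0 ∧ z 1 = 0 ∧ z 2 = 0 ∧ z 3 = 0 := by
  cases h with
  | base x => omega
  | @mul m k a b ha hb =>
    have hma := isProdOf_pos ha
    have hmb := isProdOf_pos hb
    refine ⟨(prod2_low α a b).1, (prod2_low α a b).2.1, (prod2_low α a b).2.2, ?_⟩
    rcases (by omega : 2 ≤ m ∨ 2 ≤ k) with h2 | h2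
    · obtain ⟨h0, h1, h2'⟩ := prod_ge2 ha h2
      rw [mul69_apply3, h0, h1, h2']; ring
    · obtain ⟨h0, h1, h2'⟩ := prod_ge2 hb h2
      rw [mul69_apply3, h0, h1, h2']; ring

lemma prod_ge5 {α : ℂ} {n : ℕ} {z : Fin 5 → ℂ} (h : IsProdOf (mul69 α) n z)
    (hn : 5 ≤ n) : z = 0 := by
  cases h with
  | base x => omega
  | @mul m k a b ha hb =>
    have hma := isProdOf_pos ha
    have hmb := isProdOf_pos hb
    funext i
    rcases (by omega : 3 ≤ m ∨ 3 ≤ k) with h3 | h3 <;>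
    · obtain ⟨h0, h1, h2, h3'⟩ := prod_ge3 (by assumption) h3
      rcases fin5_cases i with rfl | rfl | rfl | rfl | rfl <;>
        simp only [mul69_apply0, mul69_apply1, mul69_apply2, mul69_apply3, mul69_apply4,
          h0, h1, h2, h3', Pi.zero_apply] <;> ring

/-- The algebra is nilpotent (A⁶ = 0), commutative, satisfies the almost-Jordan identity, but does not satisfy the Jordan identity. -/
theorem c69_properties (α : ℂ) :
    (∀ x y : Fin 5 → ℂ, mul69 α x y = mul69 α y x) ∧
    (∀ z : Fin 5 → ℂ, IsProdOf (mul69 α) 6 z → z = 0) ∧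
    (∀ x y : Fin 5 → ℂ,
        (2 : ℂ) • mul69 α (mul69 α (mul69 α y x) x) x + mul69 α y (mul69 α (mul69 α x x) x) =
          (3 : ℂ) • mul69 α (mul69 α y (mul69 α x x)) x) ∧
    (∃ x y : Fin 5 → ℂ,
        mul69 α (mul69 α (mul69 α x x) y) x ≠ mul69 α (mul69 α x x) (mul69 α y x)) := by
  refine ⟨?_, ?_, ?_, ?_⟩
  · intro x y
    funext i; rcases fin5_cases i with rfl | rfl | rfl | rfl | rfl <;>
      simp only [mul69_apply0, mul69_apply1, mul69_apply2, mul69_apply3, mul69_apply4] <;> ring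
  · intro z hz
    exact prod_ge5 hz (by norm_num)
  · intro x y
    funext i
    rcases fin5_cases i with rfl | rfl | rfl | rfl | rfl <;>
      simp only [Pi.add_apply, Pi.smul_apply, smul_eq_mul, mul69_apply0, mul69_apply1,
        mul69_apply2, mul69_apply3, mul69_apply4] <;> ring
  · refine ⟨![1,0,0,0,0], ![1,0,0,0,0], ?_⟩
    intro h
    have h4 := congrFun h 4
    simp only [mul69_apply0, mul69_apply1, mul69_apply2, mul69_apply3, mul69_apply4,
      Matrix.cons_val_zero, Matrix.cons_val_one, Matrix.head_cons] at h4
    norm_num at h4
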